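/- arXiv:2207.04934 — 2 statements merged into one kernel-verified Lean document; each statement's English description precedes it below -/
import Mathlib

section
/- Let f_c : ℝ^m → ℝ be convex and differentiable, f : ℝ^n → ℝ differentiable, P : ℝ^m → ℝ^n linear with transpose R = Pᵀ, y₀ ∈ ℝ^n and x₀ = R y₀. Define ψ(x) = f_c(x) − ⟨x − x₀, ∇f_c(x₀) − R ∇f(y₀)⟩. If x ∈ ℝ^m satisfies ψ(x) < f_c(x₀), then ⟨P(x − x₀), ∇f(y₀)⟩ < 0; that is, d = P(x − x₀) is a descent direction for the fine-grid objective f at y₀. -/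
open scoped InnerProductSpace

lemma bregman_nonneg {m : ℕ} (fc : EuclideanSpace ℝ (Fin m) → ℝ)
    (hconv : ConvexOn ℝ Set.univ fc)
    (x₀ x : EuclideanSpace ℝ (Fin m)) (g : EuclideanSpace ℝ (Fin m))
    (hg : HasGradientAt fc g x₀) :
    ⟪g, x - x₀⟫_ℝ ≤ fc x - fc x₀ := by
  by_cases hxx : x = x₀
  · simp [hxx]
  · set v := x - x₀ with hv
    have hline : ∀ t : ℝ, HasDerivAt (fun t : ℝ => x₀ + t • v) v t := by
      intro t
      simpa using ((hasDerivAt_id t).smul_const v).const_add x₀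
    set φ : ℝ → ℝ := fun t => fc (x₀ + t • v) with hφ
    have hconvφ : ConvexOn ℝ Set.univ φ := by
      have := hconv.comp_affineMap (AffineMap.lineMap x₀ x : ℝ →ᵃ[ℝ] _)
      have heq : (fc ∘ (AffineMap.lineMap x₀ x : ℝ →ᵃ[ℝ] _)) = φ := by
        funext t
        simp [φ, AffineMap.lineMap_apply, hv]
        congr 1
        module
      rw [heq] at this
      refine this.subset (fun t _ => ?_) convex_univ
      simp
    have hderiv : HasDerivAt φ ⟪g, v⟫_ℝ 0 := by
      have h0 : HasGradientAt fc g (x₀ + (0:ℝ) • v) := by simpa using hg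
      have := (h0.hasFDerivAt).comp_hasDerivAt 0 (hline 0)
      simp at this
      exact this
    have hs := hconvφ.le_slope_of_hasDerivAt (Set.mem_univ (0:ℝ)) (Set.mem_univ 1)
      one_pos hderiv
    have : slope φ 0 1 = fc x - fc x₀ := by
      simp only [slope_def_field, φ, zero_smul, add_zero, one_smul]
      have : x₀ + v = x := by rw [hv]; abel
      rw [this]
      ring
    rw [this] at hs
    exact hs

/-- Coarse-grid descent directions: if `f_c` is convex and differentiable and
`ψ(x) = f_c(x) − ⟨x − x₀, ∇f_c(x₀) − R ∇f(y₀)⟩` with `R = Pᵀ` and `x₀ = R y₀`,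
then `ψ(x) < f_c(x₀)` implies `⟪P(x − x₀), ∇f(y₀)⟫ < 0`, i.e. `d = P(x − x₀)`
is a descent direction for the fine-grid objective `f` at `y₀`. -/
theorem coarse_model_descent_direction
    (m n : ℕ)
    (fc : EuclideanSpace ℝ (Fin m) → ℝ) (f : EuclideanSpace ℝ (Fin n) → ℝ)
    (hconv : ConvexOn ℝ Set.univ fc)
    (gfc : EuclideanSpace ℝ (Fin m) → EuclideanSpace ℝ (Fin m))
    (gf : EuclideanSpace ℝ (Fin n) → EuclideanSpace ℝ (Fin n))
    (hfc : ∀ x, HasGradientAt fc (gfc x) x)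
    (hf : ∀ y, HasGradientAt f (gf y) y)
    (P : EuclideanSpace ℝ (Fin m) →L[ℝ] EuclideanSpace ℝ (Fin n))
    (R : EuclideanSpace ℝ (Fin n) →L[ℝ] EuclideanSpace ℝ (Fin m))
    (hR : R = ContinuousLinearMap.adjoint P)
    (y₀ : EuclideanSpace ℝ (Fin n)) (x₀ : EuclideanSpace ℝ (Fin m))
    (hx₀ : x₀ = R y₀)
    (ψ : EuclideanSpace ℝ (Fin m) → ℝ)
    (hψ : ∀ x, ψ x = fc x - ⟪x - x₀, gfc x₀ - R (gf y₀)⟫_ℝ)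
    (x : EuclideanSpace ℝ (Fin m)) (hdec : ψ x < fc x₀) :
    ⟪P (x - x₀), gf y₀⟫_ℝ < 0 := by
  have hbreg := bregman_nonneg fc hconv x₀ x (gfc x₀) (hfc x₀)
  have hψx := hψ x
  rw [inner_sub_right] at hψx
  have hsym : ⟪x - x₀, gfc x₀⟫_ℝ = ⟪gfc x₀, x - x₀⟫_ℝ := real_inner_comm _ _
  have hadj : ⟪P (x - x₀), gf y₀⟫_ℝ = ⟪x - x₀, R (gf y₀)⟫_ℝ := by
    rw [hR]
    exact (ContinuousLinearMap.adjoint_inner_right P _ _).symm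
  rw [hadj]
  have := hdec
  rw [hψx] at this
  linarith [hbreg, hsym ▸ hbreg]
end

section
/- Let I be a finite nonempty index set, (η_i)_{i∈I} ⊂ (0,1) and weights ω_i > 0 with Σ_{i∈I} ω_i = 1. Define the weighted geometric mean η̄ = (∏_{i∈I} (η_i/(1−η_i))^{ω_i}) / (1 + ∏_{i∈I} (η_i/(1−η_i))^{ω_i}). Then η̄ ∈ (0,1) and η̄ satisfies the Riemannian center-of-mass condition Σ_{i∈I} ω_i exp_{η̄}^{-1}(η_i) = 0, i.e., Σ_{i∈I} ω_i η̄(1−η̄) log((1−η̄) η_i / (η̄ (1−η_i))) = 0; moreover η̄ is the unique point in (0,1) with this property. -/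
/-- The weighted geometric mean
`η̄ = (∏ᵢ (ηᵢ/(1−ηᵢ))^{ωᵢ}) / (1 + ∏ᵢ (ηᵢ/(1−ηᵢ))^{ωᵢ})` of points
`ηᵢ ∈ (0,1)` with positive weights `ωᵢ` summing to `1` lies in `(0,1)` and is
the unique point of `(0,1)` satisfying the Riemannian center-of-mass condition
`Σᵢ ωᵢ exp_{η̄}⁻¹(ηᵢ) = 0`, where
`exp_c⁻¹(η) = c(1−c) log((1−c)η/(c(1−η)))`. -/
theorem weighted_geometric_mean_center_of_mass
    (ι : Type*) [Fintype ι] [Nonempty ι]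
    (η : ι → ℝ) (hη : ∀ i, η i ∈ Set.Ioo (0 : ℝ) 1)
    (ω : ι → ℝ) (hω : ∀ i, 0 < ω i) (hsum : ∑ i, ω i = 1)
    (ηbar : ℝ)
    (hbar : ηbar = (∏ i, (η i / (1 - η i)) ^ (ω i))
        / (1 + ∏ i, (η i / (1 - η i)) ^ (ω i))) :
    ηbar ∈ Set.Ioo (0 : ℝ) 1
    ∧ ∑ i, ω i * (ηbar * (1 - ηbar)
        * Real.log ((1 - ηbar) * η i / (ηbar * (1 - η i)))) = 0
    ∧ ∀ c ∈ Set.Ioo (0 : ℝ) 1,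
        (∑ i, ω i * (c * (1 - c) * Real.log ((1 - c) * η i / (c * (1 - η i)))) = 0)
        → c = ηbar := by
  set P : ℝ := ∏ i, (η i / (1 - η i)) ^ (ω i) with hP
  have hηpos : ∀ i, 0 < η i / (1 - η i) := fun i =>
    div_pos (hη i).1 (by linarith [(hη i).2])
  have hPpos : 0 < P :=
    Finset.prod_pos fun i _ => Real.rpow_pos_of_pos (hηpos i) _
  have h1P : 0 < 1 + P := by linarith
  have hb0 : 0 < ηbar := hbar ▸ div_pos hPpos h1P
  have hb1 : ηbar < 1 := hbar ▸ (div_lt_one h1P).2 (by linarith)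
  have hratio : ηbar / (1 - ηbar) = P := by
    rw [hbar]
    have : (1 : ℝ) - P / (1 + P) = 1 / (1 + P) := by field_simp; ring
    rw [this]
    field_simp
  have hlogP : Real.log P = ∑ i, ω i * Real.log (η i / (1 - η i)) := by
    rw [hP, Real.log_prod (fun i _ => (Real.rpow_pos_of_pos (hηpos i) _).ne')]
    exact Finset.sum_congr rfl fun i _ => Real.log_rpow (hηpos i) _
  -- key: sum formula for any c ∈ (0,1)
  have key : ∀ c : ℝ, 0 < c → c < 1 →
      ∑ i, ω i * (c * (1 - c) * Real.log ((1 - c) * η i / (c * (1 - η i))))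
        = c * (1 - c) * (Real.log P - Real.log (c / (1 - c))) := by
    intro c hc0 hc1
    have hc1' : 0 < 1 - c := by linarith
    have hterm : ∀ i, Real.log ((1 - c) * η i / (c * (1 - η i)))
        = Real.log (η i / (1 - η i)) - Real.log (c / (1 - c)) := by
      intro i
      rw [← Real.log_div (hηpos i).ne' (div_pos hc0 hc1').ne']
      congr 1
      have h1 : (1 : ℝ) - η i ≠ 0 := by linarith [(hη i).2]
      field_simp
    calc ∑ i, ω i * (c * (1 - c) * Real.log ((1 - c) * η i / (c * (1 - η i))))
        = ∑ i, (c * (1 - c) * (ω i * Real.log (η i / (1 - η i)))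
            - c * (1 - c) * (ω i * Real.log (c / (1 - c)))) := by
          refine Finset.sum_congr rfl fun i _ => ?_
          rw [hterm i]; ring
      _ = c * (1 - c) * (Real.log P - Real.log (c / (1 - c))) := by
          rw [Finset.sum_sub_distrib, ← Finset.mul_sum, ← Finset.mul_sum,
            ← Finset.sum_mul, hsum, ← hlogP]
          ring
  refine ⟨⟨hb0, hb1⟩, ?_, ?_⟩
  · rw [key ηbar hb0 hb1, hratio]
    ring
  · intro c hc hzero
    obtain ⟨hc0, hc1⟩ := hc
    rw [key c hc0 hc1] at hzero
    have hc1' : 0 < 1 - c := by linarith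
    have hcc : 0 < c * (1 - c) := by positivity
    have hlog : Real.log (c / (1 - c)) = Real.log P := by
      have := mul_eq_zero.1 hzero
      rcases this with h | h
      · exact absurd h hcc.ne'
      · linarith
    have hcP : c / (1 - c) = P :=
      Real.log_injOn_pos (Set.mem_Ioi.2 (div_pos hc0 hc1'))
        (Set.mem_Ioi.2 hPpos) hlog
    rw [← hratio] at hcP
    have hb1' : (0:ℝ) < 1 - ηbar := by linarith
    field_simp at hcP
    linarith [hcP]
end
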